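/- Large minimum cut implies approximate recovery: There exist a constant p₀ ∈ (0, 1/2), a function f : (0, p₀) → ℝ with f(p) → 0 as p → 0, and a constant c > 0, such that for every p ∈ (0, p₀) there exists N₀ with the following property: for every graph G = (V,E) on N ≥ N₀ vertices whose global minimum cut has size at least c·log₂ N, every ground truth y : V → {−1,+1}, and every selection X ↦ Ŷ(X) of a maximizer of Σ_{uv∈E} X_uv·Y_u·Y_v over Y ∈ {−1,+1}^V, the expectation over the random edge observations X of min(Hamming error of Ŷ w.r.t. y, Hamming error of −Ŷ w.r.t. y) is at most f(p)·N. -/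

import Mathlib

open Finset

def IsSign (x : ℤ) : Prop := x = 1 ∨ x = -1

def pairProd {V : Type*} (y : V → ℤ) : Sym2 V → ℤ :=
  Sym2.lift ⟨fun u v => y u * y v, fun u v => mul_comm (y u) (y v)⟩

section

variable {V : Type*} [Fintype V] [DecidableEq V]

/-- The boundary `δ(S)`: edges of `G` with exactly one endpoint in `S`. -/
def bdry (G : SimpleGraph V) [DecidableRel G.Adj] (S : Finset V) : Finset (Sym2 V) :=
  G.edgeFinset.filter fun e => ∃ u v : V, e = s(u, v) ∧ u ∈ S ∧ v ∉ S

def hamming (Yh y : V → ℤ) : ℕ := (univ.filter fun v => Yh v ≠ y v).card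

def Maximizes (G : SimpleGraph V) [DecidableRel G.Adj] (Xe : G.edgeSet → ℤ)
    (Yh : V → ℤ) : Prop :=
  (∀ v, IsSign (Yh v)) ∧
  ∀ Y : V → ℤ, (∀ v, IsSign (Y v)) →
    (∑ e : G.edgeSet, Xe e * pairProd Y e.val) ≤ ∑ e : G.edgeSet, Xe e * pairProd Yh e.val

/-- Expectation, over the random edge observations generated from ground truth `y` with
edge noise `p`, of a function `f` of the edge observations. -/
noncomputable def expValE (G : SimpleGraph V) [DecidableRel G.Adj] (p : ℝ) (y : V → ℤ)
    (f : (G.edgeSet → ℤ) → ℝ) : ℝ :=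
  ∑ fE : G.edgeSet → Bool,
    (∏ e : G.edgeSet, if fE e then p else 1 - p) *
      f (fun e => (if fE e then -1 else 1) * pairProd y e.val)

end

set_option linter.unusedSectionVars false

section Aux1
variable {V : Type*} [Fintype V] [DecidableEq V] (G : SimpleGraph V) [DecidableRel G.Adj]

lemma mem_bdry_iff {S : Finset V} {u v : V} (h : G.Adj u v) :
    s(u,v) ∈ bdry G S ↔ ((u ∈ S ∧ v ∉ S) ∨ (v ∈ S ∧ u ∉ S)) := by
  unfold bdry
  simp only [Finset.mem_filter, SimpleGraph.mem_edgeFinset, SimpleGraph.mem_edgeSet]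
  constructor
  · rintro ⟨-, a, b, hab, ha, hb⟩
    rcases Sym2.eq_iff.1 hab with ⟨rfl, rfl⟩ | ⟨rfl, rfl⟩
    · exact Or.inl ⟨ha, hb⟩
    · exact Or.inr ⟨ha, hb⟩
  · rintro (⟨h1, h2⟩ | ⟨h1, h2⟩)
    · exact ⟨h, u, v, rfl, h1, h2⟩
    · exact ⟨h, v, u, Sym2.eq_swap, h1, h2⟩

def dbdry (S : Finset V) : Finset (V × V) :=
  univ.filter fun q => G.Adj q.1 q.2 ∧ q.1 ∈ S ∧ q.2 ∉ S

lemma card_dbdry (S : Finset V) : (dbdry G S).card = (bdry G S).card := by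
  apply Finset.card_bij (fun q _ => s(q.1, q.2))
  · rintro ⟨u, v⟩ hq
    simp only [dbdry, mem_filter] at hq
    exact (mem_bdry_iff G hq.2.1).2 (Or.inl hq.2.2)
  · rintro ⟨u, v⟩ hq ⟨u', v'⟩ hq' he
    simp only [dbdry, mem_filter] at hq hq'
    rcases Sym2.eq_iff.1 he with ⟨rfl, rfl⟩ | ⟨rfl, rfl⟩
    · rfl
    · exact absurd hq'.2.2.1 hq.2.2.2
  · intro e he
    simp only [bdry, mem_filter, SimpleGraph.mem_edgeFinset, SimpleGraph.mem_edgeSet] at he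
    obtain ⟨hadj, u, v, rfl, hu, hv⟩ := he
    refine ⟨(u, v), ?_, rfl⟩
    simp only [dbdry, mem_filter, mem_univ, true_and]
    exact ⟨by rwa [SimpleGraph.mem_edgeSet] at hadj, hu, hv⟩

lemma bdry_compl (S : Finset V) : bdry G (univ \ S) = bdry G S := by
  unfold bdry
  apply Finset.filter_congr
  intro e he
  simp only [mem_sdiff, mem_univ, true_and, not_not, eq_iff_iff]
  constructor
  · rintro ⟨u, v, rfl, hu, hv⟩
    exact ⟨v, u, Sym2.eq_swap, hv, hu⟩
  · rintro ⟨u, v, rfl, hu, hv⟩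
    exact ⟨v, u, Sym2.eq_swap, hv, hu⟩

/-- cuts compatible with coloring `c`, with boundary at most `B` -/
def kcuts (c : V → V) (B : ℕ) : Finset (Finset V) :=
  univ.powerset.filter fun S => S.Nonempty ∧ S ≠ univ ∧
    (∀ u v : V, c u = c v → (u ∈ S ↔ v ∈ S)) ∧ (bdry G S).card ≤ B

lemma mem_kcuts {c : V → V} {B : ℕ} {S : Finset V} :
    S ∈ kcuts G c B ↔ S.Nonempty ∧ S ≠ univ ∧
      (∀ u v : V, c u = c v → (u ∈ S ↔ v ∈ S)) ∧ (bdry G S).card ≤ B := by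
  simp [kcuts]

lemma kcuts_card_le_base (c : V → V) (B : ℕ) :
    (kcuts G c B).card ≤ 2 ^ (univ.image c).card := by
  calc (kcuts G c B).card ≤ ((univ.image c).powerset).card := by
        apply Finset.card_le_card_of_injOn (fun S => S.image c)
        · intro S hS
          simp only [Finset.mem_coe, mem_powerset]
          exact Finset.image_subset_image (f := c) (subset_univ S)
        · intro S₁ h₁ S₂ h₂ him
          have him' : S₁.image c = S₂.image c := him
          have hc₁ := ((mem_kcuts G).1 h₁).2.2.1
          have hc₂ := ((mem_kcuts G).1 h₂).2.2.1
          ext v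
          constructor
          · intro hv
            have : c v ∈ S₂.image c := by rw [← him']; exact mem_image_of_mem c hv
            obtain ⟨u, hu, hcu⟩ := mem_image.1 this
            exact (hc₂ u v hcu).1 hu
          · intro hv
            have : c v ∈ S₁.image c := by rw [him']; exact mem_image_of_mem c hv
            obtain ⟨u, hu, hcu⟩ := mem_image.1 this
            exact (hc₁ u v hcu).1 hu
    _ = 2 ^ (univ.image c).card := by rw [Finset.card_powerset]

end Aux1

section Karger
variable {V : Type*} [Fintype V] [DecidableEq V] (G : SimpleGraph V) [DecidableRel G.Adj]

def merge (c : V → V) (q : V × V) : V → V := fun w => if c w = c q.2 then c q.1 else c w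

lemma image_merge (c : V → V) (q : V × V) (hq : c q.1 ≠ c q.2) :
    univ.image (merge c q) = (univ.image c).erase (c q.2) := by
  ext i
  simp only [mem_image, mem_univ, true_and, mem_erase]
  constructor
  · rintro ⟨w, rfl⟩
    by_cases h : c w = c q.2
    · have hmw : merge c q w = c q.1 := by simp [merge, h]
      rw [hmw]
      exact ⟨hq, q.1, rfl⟩
    · have hmw : merge c q w = c w := by simp [merge, h]
      rw [hmw]
      exact ⟨h, w, rfl⟩
  · rintro ⟨hi, w, rfl⟩
    refine ⟨w, ?_⟩
    unfold merge
    rw [if_neg hi]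

lemma closed_merge {c : V → V} {q : V × V} {S : Finset V}
    (hS : ∀ u v : V, c u = c v → (u ∈ S ↔ v ∈ S)) (hq : q.1 ∈ S ↔ q.2 ∈ S) :
    ∀ u v : V, merge c q u = merge c q v → (u ∈ S ↔ v ∈ S) := by
  intro u v h
  unfold merge at h
  by_cases h1 : c u = c q.2 <;> by_cases h2 : c v = c q.2 <;>
    simp only [h1, h2, if_pos, if_neg, if_true, if_false] at h
  · exact hS u v (h1.trans h2.symm)
  · exact (hS u q.2 h1).trans (hq.symm.trans (hS q.1 v h))
  · exact ((hS u q.1 h).trans hq).trans (hS q.2 v h2.symm)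
  · exact hS u v h

lemma karger_count (lam a B : ℕ) (hl : 0 < lam) (ha : 1 ≤ a) (hB : 2*B ≤ a*lam)
    (hmin : ∀ S : Finset V, S.Nonempty → S ≠ univ → lam ≤ (bdry G S).card) :
    ∀ (r : ℕ) (c : V → V), (univ.image c).card = r →
      (kcuts G c B).card ≤ 2 ^ a * ((max r a).choose a) := by
  intro r
  induction r using Nat.strong_induction_on with
  | _ r IH =>
  intro c hc
  by_cases hra : r ≤ a
  · rw [max_eq_right hra, Nat.choose_self, mul_one]
    calc (kcuts G c B).card ≤ 2^(univ.image c).card := kcuts_card_le_base G c B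
      _ = 2^r := by rw [hc]
      _ ≤ 2^a := Nat.pow_le_pow_right (by norm_num) hra
  push_neg at hra
  have hr2 : 2 ≤ r := by omega
  set X : Finset (V × V) := univ.filter (fun q : V × V => G.Adj q.1 q.2 ∧ c q.1 ≠ c q.2) with hX
  set m : ℕ := X.card with hm
  -- fibers give r * lam ≤ m
  have hfib : ∀ i ∈ univ.image c, lam ≤ (dbdry G (univ.filter fun v => c v = i)).card := by
    intro i hi
    obtain ⟨w, -, rfl⟩ := mem_image.1 hi
    rw [card_dbdry]
    apply hmin
    · exact ⟨w, by simp⟩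
    · intro hun
      obtain ⟨j, hj, hji⟩ := Finset.exists_mem_ne (by omega : 1 < (univ.image c).card) (c w)
      obtain ⟨w', -, rfl⟩ := mem_image.1 hj
      have hw' : w' ∈ univ.filter fun v => c v = c w := by rw [hun]; exact mem_univ w'
      exact hji (mem_filter.1 hw').2
  have hrlam : r * lam ≤ m := by
    have hdisj : ∀ x ∈ univ.image c, ∀ y ∈ univ.image c, x ≠ y →
        Disjoint (dbdry G (univ.filter fun v => c v = x)) (dbdry G (univ.filter fun v => c v = y)) := by
      intro x hx y hy hxy
      rw [Finset.disjoint_left]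
      rintro ⟨u, v⟩ hu hv
      simp only [dbdry, mem_filter, mem_univ, true_and] at hu hv
      exact hxy (hu.2.1.symm.trans hv.2.1)
    calc r * lam = ∑ _i ∈ univ.image c, lam := by rw [Finset.sum_const, smul_eq_mul, hc]
      _ ≤ ∑ i ∈ univ.image c, (dbdry G (univ.filter fun v => c v = i)).card :=
          Finset.sum_le_sum hfib
      _ = ((univ.image c).biUnion (fun i => dbdry G (univ.filter fun v => c v = i))).card :=
          (Finset.card_biUnion hdisj).symm
      _ ≤ m := by
          apply Finset.card_le_card
          intro q hq
          simp only [Finset.mem_biUnion] at hq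
          obtain ⟨i, hi, hq⟩ := hq
          simp only [dbdry, mem_filter, mem_univ, true_and] at hq
          simp only [hX, mem_filter, mem_univ, true_and]
          exact ⟨hq.1, fun h => hq.2.2 (h.symm.trans hq.2.1)⟩
  have hmpos : 0 < m := by
    have : 0 < r * lam := Nat.mul_pos (by omega) hl
    omega
  -- key1
  have key1 : ∀ q ∈ X, (kcuts G c B).filter (fun S => (q.1 ∈ S ↔ q.2 ∈ S)) ⊆
      kcuts G (merge c q) B := by
    intro q hq S hS
    rw [mem_filter] at hS
    obtain ⟨hS, hiff⟩ := hS
    rw [mem_kcuts] at hS ⊢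
    exact ⟨hS.1, hS.2.1, closed_merge hS.2.2.1 hiff, hS.2.2.2⟩
  -- key2
  have key2 : ∀ S ∈ kcuts G c B, m ≤ (X.filter (fun q => (q.1 ∈ S ↔ q.2 ∈ S))).card + 2*B := by
    intro S hS
    rw [mem_kcuts] at hS
    have hsub : X.filter (fun q => ¬(q.1 ∈ S ↔ q.2 ∈ S)) ⊆
        dbdry G S ∪ dbdry G (univ \ S) := by
      rintro ⟨u, v⟩ hq
      simp only [mem_filter, hX, mem_univ, true_and] at hq
      obtain ⟨⟨hadj, -⟩, hniff⟩ := hq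
      rw [Finset.mem_union]
      by_cases hu : u ∈ S
      · have hv : v ∉ S := fun hv => hniff ⟨fun _ => hv, fun _ => hu⟩
        exact Or.inl (by simp only [dbdry, mem_filter, mem_univ, true_and]; exact ⟨hadj, hu, hv⟩)
      · have hv : v ∈ S := by by_contra hv; exact hniff ⟨fun h => absurd h hu, fun h => absurd h hv⟩
        refine Or.inr ?_
        simp only [dbdry, mem_filter, mem_univ, true_and, mem_sdiff, not_and, not_not]
        exact ⟨hadj, hu, hv⟩
    have hcount : (X.filter (fun q => ¬(q.1 ∈ S ↔ q.2 ∈ S))).card ≤ 2*B := by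
      calc (X.filter (fun q => ¬(q.1 ∈ S ↔ q.2 ∈ S))).card
          ≤ (dbdry G S ∪ dbdry G (univ \ S)).card := Finset.card_le_card hsub
        _ ≤ (dbdry G S).card + (dbdry G (univ \ S)).card := Finset.card_union_le _ _
        _ = (bdry G S).card + (bdry G S).card := by rw [card_dbdry, card_dbdry, bdry_compl]
        _ ≤ 2*B := by have := hS.2.2.2; omega
    have := Finset.card_filter_add_card_filter_not
      (s := X) (p := fun q : V × V => (q.1 ∈ S ↔ q.2 ∈ S))
    omega
  -- averaging
  have swap : ∑ q ∈ X, ((kcuts G c B).filter (fun S => q.1 ∈ S ↔ q.2 ∈ S)).card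
      = ∑ S ∈ kcuts G c B, (X.filter (fun q => q.1 ∈ S ↔ q.2 ∈ S)).card := by
    simp_rw [Finset.card_filter]
    exact Finset.sum_comm
  have lower : (kcuts G c B).card * (m - 2*B) ≤ ∑ q ∈ X, (kcuts G (merge c q) B).card := by
    calc (kcuts G c B).card * (m - 2*B)
        = ∑ _S ∈ kcuts G c B, (m - 2*B) := by rw [Finset.sum_const, smul_eq_mul]
      _ ≤ ∑ S ∈ kcuts G c B, (X.filter (fun q => q.1 ∈ S ↔ q.2 ∈ S)).card := by
          apply Finset.sum_le_sum; intro S hS; have := key2 S hS; omega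
      _ = ∑ q ∈ X, ((kcuts G c B).filter (fun S => q.1 ∈ S ↔ q.2 ∈ S)).card := swap.symm
      _ ≤ ∑ q ∈ X, (kcuts G (merge c q) B).card :=
          Finset.sum_le_sum (fun q hq => Finset.card_le_card (key1 q hq))
  set K := 2 ^ a * ((r-1).choose a) with hK
  have upper : ∑ q ∈ X, (kcuts G (merge c q) B).card ≤ m * K := by
    have hterm : ∀ q ∈ X, (kcuts G (merge c q) B).card ≤ K := by
      intro q hq
      simp only [hX, mem_filter, mem_univ, true_and] at hq
      have himg : (univ.image (merge c q)).card = r - 1 := by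
        rw [image_merge c q hq.2, Finset.card_erase_of_mem, hc]
        exact mem_image.2 ⟨q.2, mem_univ _, rfl⟩
      have := IH (r-1) (by omega) (merge c q) himg
      rwa [max_eq_left (by omega : a ≤ r - 1)] at this
    calc ∑ q ∈ X, (kcuts G (merge c q) B).card ≤ ∑ _q ∈ X, K := Finset.sum_le_sum hterm
      _ = m * K := by rw [Finset.sum_const, smul_eq_mul]
  -- arithmetic
  have haux : r * (2*B) ≤ m * a := by
    calc r * (2*B) ≤ r * (a*lam) := Nat.mul_le_mul_left r hB
      _ = a * (r * lam) := by ring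
      _ ≤ a * m := Nat.mul_le_mul_left a hrlam
      _ = m * a := by ring
  have h2 : m * (r - a) ≤ r * (m - 2*B) := by
    rw [Nat.mul_sub, Nat.mul_sub]
    calc m*r - m*a = r*m - m*a := by rw [mul_comm m r]
      _ ≤ r*m - r*(2*B) := Nat.sub_le_sub_left haux (r*m)
  have hfin : (kcuts G c B).card * (r - a) ≤ r * K := by
    have step : (kcuts G c B).card * (m * (r - a)) ≤ (kcuts G c B).card * (r * (m - 2*B)) :=
      Nat.mul_le_mul_left _ h2
    have step3 : r * ((kcuts G c B).card * (m-2*B)) ≤ r * (m*K) :=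
      Nat.mul_le_mul_left r (le_trans lower upper)
    have hmm : m * ((kcuts G c B).card * (r-a)) ≤ m * (r * K) := by
      calc m * ((kcuts G c B).card * (r-a)) = (kcuts G c B).card * (m * (r-a)) := by ring
        _ ≤ (kcuts G c B).card * (r * (m - 2*B)) := step
        _ = r * ((kcuts G c B).card * (m-2*B)) := by ring
        _ ≤ r * (m*K) := step3
        _ = m * (r*K) := by ring
    exact Nat.le_of_mul_le_mul_left hmm hmpos
  have hch : r * K = (r - a) * (2^a * (r.choose a)) := by
    have hid := Nat.choose_mul_succ_eq (r-1) a
    have hr1 : r - 1 + 1 = r := by omega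
    rw [hr1] at hid
    calc r * K = 2^a * ((r-1).choose a * r) := by rw [hK]; ring
      _ = 2^a * (r.choose a * (r - a)) := by rw [hid]
      _ = (r-a) * (2^a * r.choose a) := by ring
  rw [max_eq_left (le_of_lt hra)]
  have hfin2 : (kcuts G c B).card * (r - a) ≤ (2^a * r.choose a) * (r - a) := by
    rw [mul_comm (2^a * r.choose a) (r-a), ← hch]; exact hfin
  exact Nat.le_of_mul_le_mul_right hfin2 (by omega)

lemma karger_final (lam a B : ℕ) (hl : 0 < lam) (ha : 1 ≤ a) (hB : 2*B ≤ a*lam)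
    (hmin : ∀ S : Finset V, S.Nonempty → S ≠ univ → lam ≤ (bdry G S).card) :
    ((univ.powerset.filter fun S : Finset V =>
        S.Nonempty ∧ S ≠ univ ∧ (bdry G S).card ≤ B)).card
      ≤ 2 ^ a * ((max (Fintype.card V) a).choose a) := by
  have h := karger_count G lam a B hl ha hB hmin (Fintype.card V) id (by simp)
  apply le_trans _ h
  apply Finset.card_le_card
  intro S hS
  rw [mem_filter] at hS
  rw [mem_kcuts]
  exact ⟨hS.2.1, hS.2.2.1, fun u v h => by simp at h; rw [h], hS.2.2.2⟩

end Karger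

section Prob
variable {V : Type*} [Fintype V] [DecidableEq V] (G : SimpleGraph V) [DecidableRel G.Adj]

lemma choose_le_two_pow' (n k : ℕ) : n.choose k ≤ 2 ^ n := by
  by_cases h : k ≤ n
  · calc n.choose k ≤ ∑ m ∈ Finset.range (n+1), n.choose m :=
        Finset.single_le_sum (fun i _ => Nat.zero_le _) (Finset.mem_range.2 (by omega))
      _ = 2 ^ n := Nat.sum_range_choose n
  · rw [Nat.choose_eq_zero_of_lt (by omega)]; exact Nat.zero_le _

lemma weight_nonneg (p : ℝ) (hp0 : 0 ≤ p) (hp1 : p ≤ 1) (fE : G.edgeSet → Bool) :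
    0 ≤ ∏ e : G.edgeSet, if fE e then p else 1 - p :=
  Finset.prod_nonneg fun e _ => by by_cases h : fE e <;> simp [h] <;> linarith

lemma prob_subset (p : ℝ) (hp0 : 0 ≤ p) (hp1 : p ≤ 1) (T : Finset G.edgeSet) :
    ∑ fE : G.edgeSet → Bool, (∏ e : G.edgeSet, if fE e then p else 1 - p) *
      (if ∀ e ∈ T, fE e then (1:ℝ) else 0) = p ^ T.card := by
  have h1 : ∀ fE : G.edgeSet → Bool,
      (∏ e : G.edgeSet, if fE e then p else 1 - p) * (if ∀ e ∈ T, fE e then (1:ℝ) else 0)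
      = ∏ e : G.edgeSet, ((if fE e then p else 1 - p) *
          (if e ∈ T then (if fE e then (1:ℝ) else 0) else 1)) := by
    intro fE
    rw [Finset.prod_mul_distrib]
    congr 1
    rw [Finset.prod_ite_mem, Finset.univ_inter]
    by_cases h : ∀ e ∈ T, fE e
    · rw [if_pos h, Finset.prod_eq_one]
      intro e he; rw [if_pos (h e he)]
    · rw [if_neg h]
      push_neg at h
      obtain ⟨e, he, hfe⟩ := h
      exact (Finset.prod_eq_zero he (by rw [if_neg hfe])).symm
  calc ∑ fE : G.edgeSet → Bool, (∏ e : G.edgeSet, if fE e then p else 1 - p) *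
        (if ∀ e ∈ T, fE e then (1:ℝ) else 0)
      = ∑ fE : G.edgeSet → Bool, ∏ e : G.edgeSet, ((if fE e then p else 1 - p) *
          (if e ∈ T then (if fE e then (1:ℝ) else 0) else 1)) :=
        Finset.sum_congr rfl fun fE _ => h1 fE
    _ = ∏ e : G.edgeSet, ∑ b : Bool, ((if b then p else 1 - p) *
          (if e ∈ T then (if b then (1:ℝ) else 0) else 1)) :=
        (Fintype.prod_sum (fun (e : G.edgeSet) (b : Bool) => (if b then p else 1 - p) *
          (if e ∈ T then (if b then (1:ℝ) else 0) else 1))).symm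
    _ = ∏ e : G.edgeSet, (if e ∈ T then p else 1) := by
        apply Finset.prod_congr rfl
        intro e _
        by_cases h : e ∈ T <;> simp [h] <;> ring
    _ = p ^ T.card := by rw [Finset.prod_ite_mem, Finset.univ_inter, Finset.prod_const]

lemma prob_bad (p : ℝ) (hp0 : 0 ≤ p) (hp1 : p ≤ 1) (D : Finset G.edgeSet) :
    ∑ fE : G.edgeSet → Bool, (∏ e : G.edgeSet, if fE e then p else 1 - p) *
      (if D.card ≤ 2 * (D.filter fun e => fE e).card then (1:ℝ) else 0)
    ≤ (2 * Real.sqrt p) ^ D.card := by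
  set k := (D.card + 1) / 2 with hk
  have hpt : ∀ fE : G.edgeSet → Bool,
      (if D.card ≤ 2 * (D.filter fun e => fE e).card then (1:ℝ) else 0)
      ≤ ∑ T ∈ Finset.powersetCard k D, (if ∀ e ∈ T, fE e then (1:ℝ) else 0) := by
    intro fE
    by_cases h : D.card ≤ 2 * (D.filter fun e => fE e).card
    · rw [if_pos h]
      have hkc : k ≤ (D.filter fun e => fE e).card := by
        have := Finset.card_filter_le D (fun e => fE e); omega
      obtain ⟨T, hT, hTc⟩ := Finset.exists_subset_card_eq hkc
      have hTD : T ∈ Finset.powersetCard k D :=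
        Finset.mem_powersetCard.2 ⟨hT.trans (Finset.filter_subset _ _), hTc⟩
      have hle := Finset.single_le_sum
        (f := fun T' : Finset G.edgeSet => if ∀ e ∈ T', fE e then (1:ℝ) else 0)
        (fun T' _ => by positivity) hTD
      rwa [if_pos (fun e he => (Finset.mem_filter.1 (hT he)).2)] at hle
    · rw [if_neg h]; exact Finset.sum_nonneg fun T _ => by positivity
  have hsq0 : 0 ≤ Real.sqrt p := Real.sqrt_nonneg p
  calc ∑ fE : G.edgeSet → Bool, (∏ e : G.edgeSet, if fE e then p else 1 - p) *
        (if D.card ≤ 2 * (D.filter fun e => fE e).card then (1:ℝ) else 0)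
      ≤ ∑ fE : G.edgeSet → Bool, (∏ e : G.edgeSet, if fE e then p else 1 - p) *
        (∑ T ∈ Finset.powersetCard k D, (if ∀ e ∈ T, fE e then (1:ℝ) else 0)) :=
        Finset.sum_le_sum fun fE _ =>
          mul_le_mul_of_nonneg_left (hpt fE) (weight_nonneg G p hp0 hp1 fE)
    _ = ∑ T ∈ Finset.powersetCard k D, ∑ fE : G.edgeSet → Bool,
          (∏ e : G.edgeSet, if fE e then p else 1 - p) *
          (if ∀ e ∈ T, fE e then (1:ℝ) else 0) := by
        simp_rw [Finset.mul_sum]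
        exact Finset.sum_comm
    _ = ∑ T ∈ Finset.powersetCard k D, p ^ T.card :=
        Finset.sum_congr rfl fun T _ => prob_subset G p hp0 hp1 T
    _ = ∑ T ∈ Finset.powersetCard k D, p ^ k := by
        apply Finset.sum_congr rfl
        intro T hT
        rw [(Finset.mem_powersetCard.1 hT).2]
    _ = (D.card.choose k : ℝ) * p ^ k := by
        rw [Finset.sum_const, Finset.card_powersetCard, nsmul_eq_mul]
    _ ≤ (2:ℝ) ^ D.card * Real.sqrt p ^ D.card := by
        refine mul_le_mul ?_ ?_ ?_ ?_
        · exact_mod_cast choose_le_two_pow' D.card k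
        · calc p ^ k = (Real.sqrt p ^ 2) ^ k := by rw [Real.sq_sqrt hp0]
            _ = Real.sqrt p ^ (2 * k) := by rw [← pow_mul]
            _ ≤ Real.sqrt p ^ D.card :=
              pow_le_pow_of_le_one hsq0 (Real.sqrt_le_one.2 hp1) (by omega)
        · positivity
        · positivity
    _ = (2 * Real.sqrt p) ^ D.card := (mul_pow _ _ _).symm

end Prob

section MaxArg
variable {V : Type*} [Fintype V] [DecidableEq V] (G : SimpleGraph V) [DecidableRel G.Adj]

lemma pairProd_mk (y : V → ℤ) (u v : V) : pairProd y s(u,v) = y u * y v := rfl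

lemma pairProd_sq {y : V → ℤ} (hy : ∀ v, IsSign (y v)) (e : Sym2 V) :
    pairProd y e * pairProd y e = 1 := by
  induction e using Sym2.ind with
  | _ u v =>
    rw [pairProd_mk]
    rcases hy u with h | h <;> rcases hy v with h' | h' <;> rw [h, h'] <;> norm_num

lemma pairProd_mul (y z : V → ℤ) (e : Sym2 V) :
    pairProd y e * pairProd z e = pairProd (fun v => y v * z v) e := by
  induction e using Sym2.ind with
  | _ u v => rw [pairProd_mk, pairProd_mk, pairProd_mk]; ring

lemma maximizer_cases (y Yh : V → ℤ) (hy : ∀ v, IsSign (y v)) (hYh : ∀ v, IsSign (Yh v))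
    (fE : G.edgeSet → Bool)
    (hmax : ∑ e : G.edgeSet, ((if fE e then (-1:ℤ) else 1) * pairProd y e.val) * pairProd y e.val
        ≤ ∑ e : G.edgeSet, ((if fE e then (-1:ℤ) else 1) * pairProd y e.val) * pairProd Yh e.val) :
    hamming Yh y = 0 ∨ hamming (fun v => -(Yh v)) y = 0 ∨
    ∃ S : Finset V, S.Nonempty ∧ S ≠ univ ∧
      (univ.filter (fun e : G.edgeSet => e.val ∈ bdry G S)).card ≤
        2 * ((univ.filter (fun e : G.edgeSet => e.val ∈ bdry G S)).filter (fun e => fE e)).card := by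
  classical
  set S : Finset V := univ.filter (fun v => Yh v ≠ y v) with hSdef
  by_cases hS0 : S = ∅
  · left
    rw [hamming, ← hSdef, hS0, Finset.card_empty]
  by_cases hSu : S = univ
  · right; left
    rw [hamming, Finset.card_eq_zero]
    rw [Finset.filter_eq_empty_iff]
    intro v _
    have hv : Yh v ≠ y v := by
      have : v ∈ S := hSu ▸ mem_univ v
      exact (mem_filter.1 this).2
    rcases hy v with h | h <;> rcases hYh v with h' | h' <;>
      simp [h, h'] at hv ⊢
  right; right
  refine ⟨S, Finset.nonempty_of_ne_empty hS0, hSu, ?_⟩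
  -- the signed sum on the boundary is ≤ 0
  set Z : V → ℤ := fun v => y v * Yh v with hZdef
  have hZsign : ∀ v, (v ∈ S → Z v = -1) ∧ (v ∉ S → Z v = 1) := by
    intro v
    constructor
    · intro hv
      have hne : Yh v ≠ y v := (mem_filter.1 hv).2
      rcases hy v with h | h <;> rcases hYh v with h' | h' <;> simp [hZdef, h, h'] at hne ⊢
    · intro hv
      have heq : Yh v = y v := by
        by_contra hne
        exact hv (mem_filter.2 ⟨mem_univ v, hne⟩)
      rcases hy v with h | h <;> simp [hZdef, heq, h]
  have hpp : ∀ e : G.edgeSet, pairProd Z e.val =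
      if e.val ∈ bdry G S then (-1 : ℤ) else 1 := by
    rintro ⟨e, he⟩
    induction e using Sym2.ind with
    | _ u v =>
      have hadj : G.Adj u v := by rwa [SimpleGraph.mem_edgeSet] at he
      rw [pairProd_mk]
      by_cases hu : u ∈ S <;> by_cases hv : v ∈ S
      · rw [if_neg, (hZsign u).1 hu, (hZsign v).1 hv]
        · norm_num
        · rw [mem_bdry_iff G hadj]; tauto
      · rw [if_pos, (hZsign u).1 hu, (hZsign v).2 hv]
        · norm_num
        · rw [mem_bdry_iff G hadj]; tauto
      · rw [if_pos, (hZsign u).2 hu, (hZsign v).1 hv]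
        · norm_num
        · rw [mem_bdry_iff G hadj]; tauto
      · rw [if_neg, (hZsign u).2 hu, (hZsign v).2 hv]
        · norm_num
        · rw [mem_bdry_iff G hadj]; tauto
  set σ : G.edgeSet → ℤ := fun e => if fE e then (-1:ℤ) else 1 with hσ
  have hlhs : ∑ e : G.edgeSet, (σ e * pairProd y e.val) * pairProd y e.val
      = ∑ e : G.edgeSet, σ e := by
    apply Finset.sum_congr rfl
    intro e _
    rw [mul_assoc, pairProd_sq hy, mul_one]
  have hrhs : ∑ e : G.edgeSet, (σ e * pairProd y e.val) * pairProd Yh e.val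
      = ∑ e : G.edgeSet, (σ e - 2 * (if e.val ∈ bdry G S then σ e else 0)) := by
    apply Finset.sum_congr rfl
    intro e _
    rw [mul_assoc, pairProd_mul, ← hZdef, hpp e]
    by_cases h : e.val ∈ bdry G S <;> simp [h] <;> ring
  rw [hlhs, hrhs, Finset.sum_sub_distrib] at hmax
  rw [← Finset.mul_sum] at hmax
  have hkey : ∑ e : G.edgeSet, (if e.val ∈ bdry G S then σ e else 0) ≤ 0 := by linarith
  set D : Finset G.edgeSet := univ.filter (fun e : G.edgeSet => e.val ∈ bdry G S) with hD
  have hDsum : ∑ e : G.edgeSet, (if e.val ∈ bdry G S then σ e else 0) = ∑ e ∈ D, σ e := by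
    rw [hD, Finset.sum_filter]
  rw [hDsum] at hkey
  have hsplit : ∑ e ∈ D, σ e =
      (((D.filter (fun e => ¬ fE e)).card : ℤ)) - ((D.filter (fun e => fE e)).card : ℤ) := by
    rw [← Finset.sum_filter_add_sum_filter_not D (fun e => fE e)]
    rw [Finset.sum_congr rfl (fun e he => show σ e = -1 by
        rw [hσ]; simp [(Finset.mem_filter.1 he).2]),
      Finset.sum_congr rfl (fun e he => show σ e = 1 by
        rw [hσ]; simp [(Finset.mem_filter.1 he).2])]
    simp [Finset.sum_const]
    ring
  rw [hsplit] at hkey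
  have hcards := Finset.card_filter_add_card_filter_not
    (s := D) (p := fun e : G.edgeSet => fE e)
  have h1 : (D.filter (fun e => ¬ fE e)).card ≤ (D.filter (fun e => fE e)).card := by
    exact_mod_cast sub_nonpos.1 hkey
  omega

end MaxArg

section Assembly
variable {V : Type*} [Fintype V] [DecidableEq V] (G : SimpleGraph V) [DecidableRel G.Adj]

lemma card_D (S : Finset V) :
    (univ.filter (fun e : G.edgeSet => e.val ∈ bdry G S)).card = (bdry G S).card := by
  apply Finset.card_bij (fun e _ => e.val)
  · intro e he; exact (mem_filter.1 he).2
  · intro e _ e' _ h; exact Subtype.ext h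
  · intro x hx
    have hx1 : x ∈ G.edgeFinset := (Finset.filter_subset _ _) hx
    have hx' : x ∈ G.edgeSet := by rwa [SimpleGraph.mem_edgeFinset] at hx1
    exact ⟨⟨x, hx'⟩, Finset.mem_filter.2 ⟨mem_univ _, hx⟩, rfl⟩

theorem main_bound (p : ℝ) (hp0 : 0 < p) (hp : p < 1/2^36)
    (hN16 : 16 ≤ Fintype.card V) (hNp : 2 / p ≤ (Fintype.card V : ℝ))
    (hcut : ∀ S : Finset V, S.Nonempty → S ≠ univ →
      Real.logb 2 (Fintype.card V) ≤ ((bdry G S).card : ℝ))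
    (y : V → ℤ) (hy : ∀ v, IsSign (y v))
    (Yhat : (G.edgeSet → ℤ) → (V → ℤ)) (hYhat : ∀ Xe, Maximizes G Xe (Yhat Xe)) :
    expValE G p y (fun Xe =>
        (min (hamming (Yhat Xe) y) (hamming (fun v => -(Yhat Xe v)) y) : ℝ)) ≤
      p * (Fintype.card V : ℝ) := by
  classical
  set N : ℕ := Fintype.card V with hNdef
  have hp1 : p ≤ 1 := by nlinarith
  have hple : 0 ≤ p := le_of_lt hp0
  have hN0 : 0 < N := by omega
  have hN2 : 2 ≤ N := by omega
  -- lambda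
  set lam : ℕ := ⌈Real.logb 2 N⌉₊ with hlamdef
  have hlogN1 : 1 ≤ Real.logb 2 N := by
    have h := Real.logb_le_logb_of_le (b := 2) (x := 2) (y := (N:ℝ))
      (by norm_num) (by norm_num) (by exact_mod_cast hN2)
    rwa [Real.logb_self_eq_one (by norm_num)] at h
  have hlam_pos : 0 < lam := by
    rw [hlamdef]
    exact Nat.one_le_ceil_iff.2 (by linarith)
  have hlam_le : ∀ S : Finset V, S.Nonempty → S ≠ univ → lam ≤ (bdry G S).card := by
    intro S h1 h2
    exact Nat.ceil_le.2 (hcut S h1 h2)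
  have hNlam : (N:ℝ) ≤ 2 ^ lam := by
    calc (N:ℝ) = 2 ^ Real.logb 2 N :=
        (Real.rpow_logb (by norm_num) (by norm_num) (by exact_mod_cast hN0)).symm
      _ ≤ (2:ℝ) ^ (lam:ℝ) := Real.rpow_le_rpow_of_exponent_le (by norm_num) (Nat.le_ceil _)
      _ = (2:ℝ) ^ lam := Real.rpow_natCast 2 lam
  have hNlamN : N ≤ 2 ^ lam := by
    have hc : ((2:ℝ))^lam = ((2^lam : ℕ) : ℝ) := by push_cast; ring
    rw [hc] at hNlam
    exact_mod_cast hNlam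
  -- q
  set q : ℝ := 2 * Real.sqrt p with hqdef
  have hq0 : 0 ≤ q := by positivity
  have hq : (2:ℝ)^(15:ℕ) * q ≤ 1/4 := by
    have hsp : Real.sqrt p ≤ 1/2^18 := by
      have h1 : Real.sqrt p ≤ Real.sqrt (1/2^36) := Real.sqrt_le_sqrt (le_of_lt hp)
      have h2 : Real.sqrt (1/2^36) = 1/2^18 := by
        rw [show (1/2^36 : ℝ) = (1/2^18)^2 by norm_num, Real.sqrt_sq (by norm_num)]
      linarith
    rw [hqdef]
    nlinarith
  -- the family of cuts
  set CUTS : Finset (Finset V) := univ.powerset.filter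
    (fun S : Finset V => S.Nonempty ∧ S ≠ univ) with hCUTS
  set D : Finset V → Finset G.edgeSet :=
    fun S => univ.filter (fun e : G.edgeSet => e.val ∈ bdry G S) with hDdef
  -- pointwise bound
  have hptwise : ∀ fE : G.edgeSet → Bool,
      (min (hamming (Yhat (fun e => (if fE e then -1 else 1) * pairProd y e.val)) y)
        (hamming (fun v => -(Yhat (fun e => (if fE e then -1 else 1) * pairProd y e.val) v)) y) : ℝ)
      ≤ (N:ℝ) * ∑ S ∈ CUTS,
          (if (D S).card ≤ 2 * ((D S).filter (fun e => fE e)).card then (1:ℝ) else 0) := by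
    intro fE
    set Xe : G.edgeSet → ℤ := fun e => (if fE e then -1 else 1) * pairProd y e.val with hXe
    set Yh : V → ℤ := Yhat Xe with hYh
    obtain ⟨hYsign, hYmax⟩ := hYhat Xe
    have hcases := maximizer_cases G y Yh hy hYsign fE (hYmax y hy)
    have hsum_nonneg : 0 ≤ ∑ S ∈ CUTS,
        (if (D S).card ≤ 2 * ((D S).filter (fun e => fE e)).card then (1:ℝ) else 0) :=
      Finset.sum_nonneg fun S _ => by positivity
    have hrhs_nonneg : 0 ≤ (N:ℝ) * ∑ S ∈ CUTS,
        (if (D S).card ≤ 2 * ((D S).filter (fun e => fE e)).card then (1:ℝ) else 0) :=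
      mul_nonneg (Nat.cast_nonneg N) hsum_nonneg
    rcases hcases with h0 | h0 | ⟨S, hS1, hS2, hS3⟩
    · have hz : ((hamming Yh y : ℕ) : ℝ) = 0 := by rw [h0]; norm_num
      calc min ((hamming Yh y : ℕ) : ℝ) ((hamming (fun v => -(Yh v)) y : ℕ) : ℝ)
          ≤ ((hamming Yh y : ℕ) : ℝ) := min_le_left _ _
        _ = 0 := hz
        _ ≤ _ := hrhs_nonneg
    · have hz : ((hamming (fun v => -(Yh v)) y : ℕ) : ℝ) = 0 := by rw [h0]; norm_num
      calc min ((hamming Yh y : ℕ) : ℝ) ((hamming (fun v => -(Yh v)) y : ℕ) : ℝ)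
          ≤ ((hamming (fun v => -(Yh v)) y : ℕ) : ℝ) := min_le_right _ _
        _ = 0 := hz
        _ ≤ _ := hrhs_nonneg
    · have hmem : S ∈ CUTS := by
        rw [hCUTS, mem_filter]
        exact ⟨Finset.mem_powerset.2 (subset_univ S), hS1, hS2⟩
      have hone : (1:ℝ) ≤ ∑ S ∈ CUTS,
          (if (D S).card ≤ 2 * ((D S).filter (fun e => fE e)).card then (1:ℝ) else 0) := by
        have hs := Finset.single_le_sum
          (f := fun S => (if (D S).card ≤ 2 * ((D S).filter (fun e => fE e)).card then (1:ℝ) else 0))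
          (fun S _ => by positivity) hmem
        rwa [if_pos hS3] at hs
      have hhamN : ((hamming Yh y : ℕ) : ℝ) ≤ (N:ℝ) := by
        have h1 : hamming Yh y ≤ N := by
          rw [hamming, hNdef]
          exact le_trans (Finset.card_filter_le _ _) (le_of_eq Finset.card_univ)
        exact_mod_cast h1
      calc min ((hamming Yh y : ℕ) : ℝ) ((hamming (fun v => -(Yh v)) y : ℕ) : ℝ)
          ≤ ((hamming Yh y : ℕ) : ℝ) := min_le_left _ _
        _ ≤ (N:ℝ) := hhamN
        _ = (N:ℝ) * 1 := by ring
        _ ≤ _ := mul_le_mul_of_nonneg_left hone (Nat.cast_nonneg N)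
  -- expectation bound
  have hexp : expValE G p y (fun Xe =>
        (min (hamming (Yhat Xe) y) (hamming (fun v => -(Yhat Xe v)) y) : ℝ))
      ≤ (N:ℝ) * ∑ S ∈ CUTS, q ^ (bdry G S).card := by
    rw [expValE]
    calc ∑ fE : G.edgeSet → Bool,
          (∏ e : G.edgeSet, if fE e then p else 1 - p) *
            (min (hamming (Yhat (fun e => (if fE e then -1 else 1) * pairProd y e.val)) y)
              (hamming (fun v => -(Yhat (fun e => (if fE e then -1 else 1) * pairProd y e.val) v)) y) : ℝ)
        ≤ ∑ fE : G.edgeSet → Bool,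
            (∏ e : G.edgeSet, if fE e then p else 1 - p) *
            ((N:ℝ) * ∑ S ∈ CUTS,
              (if (D S).card ≤ 2 * ((D S).filter (fun e => fE e)).card then (1:ℝ) else 0)) :=
          Finset.sum_le_sum fun fE _ =>
            mul_le_mul_of_nonneg_left (hptwise fE) (weight_nonneg G p hple hp1 fE)
      _ = ∑ fE : G.edgeSet → Bool, ∑ S ∈ CUTS, (N:ℝ) *
            ((∏ e : G.edgeSet, if fE e then p else 1 - p) *
            (if (D S).card ≤ 2 * ((D S).filter (fun e => fE e)).card then (1:ℝ) else 0)) := by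
          apply Finset.sum_congr rfl
          intro fE _
          rw [Finset.mul_sum, Finset.mul_sum]
          apply Finset.sum_congr rfl
          intro S _
          ring
      _ = ∑ S ∈ CUTS, ∑ fE : G.edgeSet → Bool, (N:ℝ) *
            ((∏ e : G.edgeSet, if fE e then p else 1 - p) *
            (if (D S).card ≤ 2 * ((D S).filter (fun e => fE e)).card then (1:ℝ) else 0)) :=
          Finset.sum_comm
      _ = (N:ℝ) * ∑ S ∈ CUTS, ∑ fE : G.edgeSet → Bool,
            ((∏ e : G.edgeSet, if fE e then p else 1 - p) *
            (if (D S).card ≤ 2 * ((D S).filter (fun e => fE e)).card then (1:ℝ) else 0)) := by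
          rw [Finset.mul_sum]
          apply Finset.sum_congr rfl
          intro S _
          rw [Finset.mul_sum]
      _ ≤ (N:ℝ) * ∑ S ∈ CUTS, q ^ (bdry G S).card := by
          apply mul_le_mul_of_nonneg_left _ (Nat.cast_nonneg N)
          apply Finset.sum_le_sum
          intro S _
          have hcd : (D S).card = (bdry G S).card := by
            rw [hDdef]; exact card_D G S
          rw [← hcd, hqdef]
          exact prob_bad G p hple hp1 (D S)
  apply le_trans hexp
  -- now bound the sum over cuts
  set M : ℕ := Fintype.card (Sym2 V) with hM
  have hMN : M ≤ N * N := by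
    rw [hM, Sym2.card]
    have hcv : Fintype.card V = N := rfl
    rw [hcv, Nat.choose_two_right, Nat.add_sub_cancel]
    apply Nat.div_le_of_le_mul
    have h1 : N + 1 ≤ 2 * N := by omega
    calc (N+1) * N ≤ (2*N) * N := Nat.mul_le_mul_right N h1

      _ = 2 * (N * N) := by ring
  -- per-m counting bound
  have hcount : ∀ m : ℕ, lam ≤ m → m ≤ N * N →
      ((CUTS.filter (fun S => (bdry G S).card = m)).card : ℕ) ≤ 2^(15*m) := by
    intro m hm hmNN
    obtain ⟨a, r, har, hrlt, ha3⟩ : ∃ a r : ℕ, lam * a + r = 3*m ∧ r < lam ∧ 3 ≤ a := by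
      refine ⟨3*m/lam, 3*m % lam, Nat.div_add_mod _ _, Nat.mod_lt _ hlam_pos, ?_⟩
      calc 3 = 3 * lam / lam := (Nat.mul_div_cancel 3 hlam_pos).symm
        _ ≤ 3 * m / lam := Nat.div_le_div_right (by omega)
    obtain ⟨P, hP⟩ : ∃ P, lam * a = P := ⟨_, rfl⟩
    have hprod : 2 * m ≤ a * lam ∧ a * lam ≤ 3 * m := by
      rw [mul_comm a lam, hP]
      rw [hP] at har
      omega
    obtain ⟨haB, halam⟩ := hprod
    have hkarger := karger_final G lam a m hlam_pos (by omega) haB hlam_le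
    have hsub : (CUTS.filter (fun S => (bdry G S).card = m)) ⊆
        univ.powerset.filter (fun S : Finset V =>
          S.Nonempty ∧ S ≠ univ ∧ (bdry G S).card ≤ m) := by
      intro S hS
      simp only [hCUTS, mem_filter, mem_powerset] at hS ⊢
      exact ⟨hS.1.1, hS.1.2.1, hS.1.2.2, le_of_eq hS.2⟩
    have hc1 : (CUTS.filter (fun S => (bdry G S).card = m)).card
        ≤ 2 ^ a * ((max N a).choose a) := le_trans (Finset.card_le_card hsub) hkarger
    have haNN : a ≤ 3 * (N * N) := by
      have h1 : a ≤ lam * a := Nat.le_mul_of_pos_left a hlam_pos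
      rw [mul_comm] at h1
      exact le_trans h1 (le_trans halam (by omega))
    have hmaxle : 2 * max N a ≤ N^5 := by
      have h1 : max N a ≤ 3 * (N * N) := by
        apply max_le _ haNN
        calc N ≤ N * N := Nat.le_mul_of_pos_right N hN0
          _ ≤ 3 * (N * N) := Nat.le_mul_of_pos_left _ (by norm_num)
      have h2 : 6 * (N * N) ≤ N^5 := by
        have h8 : 8 ≤ N^3 := by
          calc 8 = 2^3 := rfl
            _ ≤ N^3 := Nat.pow_le_pow_left hN2 3
        calc 6*(N*N) ≤ N^3*(N*N) := Nat.mul_le_mul_right _ (by omega)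
          _ = N^5 := by ring
      omega
    calc (CUTS.filter (fun S => (bdry G S).card = m)).card
        ≤ 2 ^ a * ((max N a).choose a) := hc1
      _ ≤ 2 ^ a * (max N a)^a := Nat.mul_le_mul_left _ (Nat.choose_le_pow _ _)
      _ = (2 * max N a)^a := (mul_pow 2 (max N a) a).symm
      _ ≤ (N^5)^a := Nat.pow_le_pow_left hmaxle a
      _ ≤ ((2^lam)^5)^a := Nat.pow_le_pow_left (Nat.pow_le_pow_left hNlamN 5) a
      _ = 2^(lam*5*a) := by rw [← pow_mul, ← pow_mul]; ring_nf
      _ ≤ 2^(15*m) := by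
          apply Nat.pow_le_pow_right (by omega)
          calc lam*5*a = 5*(a*lam) := by ring
            _ ≤ 5*(3*m) := Nat.mul_le_mul_left 5 halam
            _ = 15*m := by ring
  -- sum over m
  have hfiber : ∑ S ∈ CUTS, q ^ (bdry G S).card
      = ∑ m ∈ Finset.range (M+1), ∑ S ∈ CUTS.filter (fun S => (bdry G S).card = m),
          q ^ (bdry G S).card := by
    rw [Finset.sum_fiberwise_of_maps_to]
    intro S _
    rw [Finset.mem_range]
    have h1 := Finset.card_le_univ (bdry G S)
    rw [← hM] at h1
    omega
  have hsum2 : ∑ S ∈ CUTS, q ^ (bdry G S).card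
      ≤ ∑ m ∈ Finset.range (M+1), (if lam ≤ m then ((1:ℝ)/4)^m else 0) := by
    rw [hfiber]
    apply Finset.sum_le_sum
    intro m hmr
    rw [Finset.mem_range] at hmr
    have hinner : ∑ S ∈ CUTS.filter (fun S => (bdry G S).card = m), q ^ (bdry G S).card
        = ((CUTS.filter (fun S => (bdry G S).card = m)).card : ℝ) * q ^ m := by
      rw [Finset.sum_congr rfl (fun S hS => by
        rw [(Finset.mem_filter.1 hS).2]), Finset.sum_const, nsmul_eq_mul]
    rw [hinner]
    by_cases hlm : lam ≤ m
    · rw [if_pos hlm]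
      have hc := hcount m hlm (by omega)
      calc ((CUTS.filter (fun S => (bdry G S).card = m)).card : ℝ) * q ^ m
          ≤ ((2:ℝ)^(15*m)) * q ^ m := by
            apply mul_le_mul_of_nonneg_right _ (by positivity)
            exact_mod_cast hc
        _ = ((2:ℝ)^(15:ℕ) * q)^m := by rw [mul_pow ((2:ℝ)^(15:ℕ)) q m, ← pow_mul]
        _ ≤ ((1:ℝ)/4)^m := pow_le_pow_left₀ (by positivity) hq m
    · rw [if_neg hlm]
      have hempty : CUTS.filter (fun S => (bdry G S).card = m) = ∅ := by
        rw [Finset.filter_eq_empty_iff]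
        intro S hS
        rw [hCUTS, mem_filter] at hS
        have := hlam_le S hS.2.1 hS.2.2
        omega
      rw [hempty]
      simp
  -- geometric sum
  have hgeom : ∑ m ∈ Finset.range (M+1), (if lam ≤ m then ((1:ℝ)/4)^m else 0)
      ≤ ((1:ℝ)/4)^lam * (4/3) := by
    rw [← Finset.sum_filter]
    have hIco : (Finset.range (M+1)).filter (fun m => lam ≤ m) = Finset.Ico lam (M+1) := by
      ext m
      simp only [Finset.mem_Ico, Finset.mem_range, Finset.mem_filter]
      tauto
    rw [hIco, Finset.sum_Ico_eq_sum_range]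
    have hsplit : ∀ k ∈ Finset.range (M+1-lam), ((1:ℝ)/4)^(lam+k) = ((1:ℝ)/4)^lam * ((1:ℝ)/4)^k :=
      fun k _ => pow_add _ _ _
    rw [Finset.sum_congr rfl hsplit, ← Finset.mul_sum]
    apply mul_le_mul_of_nonneg_left _ (by positivity)
    rw [geom_sum_eq (by norm_num : ((1:ℝ)/4) ≠ 1)]
    have hpow : (0:ℝ) ≤ ((1:ℝ)/4)^(M+1-lam) := by positivity
    rw [div_le_iff_of_neg (by norm_num : ((1:ℝ)/4 - 1) < 0)]
    linarith
  -- finish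
  have hquarter : ((1:ℝ)/4)^lam ≤ (((N:ℝ))^2)⁻¹ := by
    have h1 : (N:ℝ)^2 ≤ ((2:ℝ)^lam)^2 := by nlinarith [hNlam, Nat.cast_nonneg (α := ℝ) N]
    have h2 : ((1:ℝ)/4)^lam = (((2:ℝ)^lam)^2)⁻¹ := by
      have h3 : (((2:ℝ)^lam)^2) = 4^lam := by
        rw [← pow_mul, mul_comm, pow_mul]
        norm_num
      rw [h3, one_div, inv_pow]
    rw [h2]
    exact inv_anti₀ (by positivity) h1
  have hpN : 2 ≤ p * N := by
    rw [div_le_iff₀ hp0] at hNp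
    linarith
  have hNR : (0:ℝ) < (N:ℝ) := by exact_mod_cast hN0
  calc (N:ℝ) * ∑ S ∈ CUTS, q ^ (bdry G S).card
      ≤ (N:ℝ) * (((1:ℝ)/4)^lam * (4/3)) :=
        mul_le_mul_of_nonneg_left (le_trans hsum2 hgeom) (Nat.cast_nonneg N)
    _ ≤ (N:ℝ) * ((((N:ℝ))^2)⁻¹ * (4/3)) :=
        mul_le_mul_of_nonneg_left
          (mul_le_mul_of_nonneg_right hquarter (by norm_num)) (Nat.cast_nonneg N)
    _ = (4/3) / (N:ℝ) := by
        field_simp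
    _ ≤ p * (N:ℝ) := by
        rw [div_le_iff₀ hNR]
        have hN1 : (1:ℝ) ≤ (N:ℝ) := by exact_mod_cast hN0
        nlinarith

end Assembly


/-- large minimum cut implies approximate recovery: there are
`p₀ ∈ (0, 1/2)`, `f` with `f(p) → 0` as `p → 0⁺`, and `c > 0` such that for every
`p ∈ (0, p₀)` there is `N₀` such that every graph on `N ≥ N₀` vertices whose global
minimum cut is at least `c log₂ N` satisfies: for every ground truth and every selection
of maximizers `Ŷ(X)`, the expected value of `min(ham(Ŷ, y), ham(−Ŷ, y))` is at most
`f(p) N`. -/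
theorem min_cut_approximate_recovery :
    ∃ p₀ : ℝ, 0 < p₀ ∧ p₀ < 1/2 ∧
    ∃ f : ℝ → ℝ, Filter.Tendsto f (nhdsWithin 0 (Set.Ioi 0)) (nhds 0) ∧
    ∃ c : ℝ, 0 < c ∧
      ∀ p : ℝ, 0 < p → p < p₀ →
      ∃ N₀ : ℕ, ∀ (V : Type) [Fintype V] [DecidableEq V]
        (G : SimpleGraph V) [DecidableRel G.Adj],
        N₀ ≤ Fintype.card V →
        (∀ S : Finset V, S.Nonempty → S ≠ univ →
          c * Real.logb 2 (Fintype.card V) ≤ ((bdry G S).card : ℝ)) →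
        ∀ y : V → ℤ, (∀ v, IsSign (y v)) →
        ∀ Yhat : (G.edgeSet → ℤ) → (V → ℤ), (∀ Xe, Maximizes G Xe (Yhat Xe)) →
        expValE G p y (fun Xe =>
            (min (hamming (Yhat Xe) y) (hamming (fun v => -(Yhat Xe v)) y) : ℝ)) ≤
          f p * (Fintype.card V : ℝ) := by
  refine ⟨1/2^36, by norm_num, by norm_num, id, ?_, 1, one_pos, ?_⟩
  · exact Filter.tendsto_id.mono_left nhdsWithin_le_nhds
  · intro p hp0 hpp0
    refine ⟨max 16 ⌈(2:ℝ)/p⌉₊, ?_⟩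
    intro V _ _ G _ hN hcut y hy Yhat hYhat
    have hN16 : 16 ≤ Fintype.card V := le_trans (le_max_left _ _) hN
    have hNp : 2/p ≤ (Fintype.card V : ℝ) := by
      have h1 : ⌈(2:ℝ)/p⌉₊ ≤ Fintype.card V := le_trans (le_max_right _ _) hN
      calc 2/p ≤ (⌈(2:ℝ)/p⌉₊ : ℝ) := Nat.le_ceil _
        _ ≤ _ := by exact_mod_cast h1
    have hcut' : ∀ S : Finset V, S.Nonempty → S ≠ univ →
        Real.logb 2 (Fintype.card V) ≤ ((bdry G S).card : ℝ) := by
      intro S h1 h2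
      have h3 := hcut S h1 h2
      rwa [one_mul] at h3
    exact main_bound G p hp0 hpp0 hN16 hNp hcut' y hy Yhat hYhat
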